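/- Let ρ : G̃ → G be as in the covering setup, with kernel K contained in the center of G̃, and let l ≥ 1. If x̃ = (ã₁,b̃₁,…,ã_l,b̃_l,c̃₁,c̃₂) and ỹ are elements of G̃^{2l+2} whose componentwise images under ρ agree and whose common image x satisfies η_G^l(x) = e, then η_{G̃}^l(x̃) and η_{G̃}^l(ỹ) both lie in K and have the same image in K/2K; moreover this common class in K/2K is unchanged if x is replaced by its simultaneous conjugate by any g ∈ G. Hence the obstruction map o₂ : (η_G^l)⁻¹(e) → K/2K is well defined and descends to the conjugation quotient. -/

import Mathlib

open scoped commutatorElement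

/-- The commutator map `μ_H^l : H^{2l} → H`,
`(a₁,b₁,…,a_l,b_l) ↦ a₁b₁a₁⁻¹b₁⁻¹ ⋯ a_l b_l a_l⁻¹ b_l⁻¹`, where the `2l`-tuple is
encoded as an `l`-tuple of pairs `(aᵢ, bᵢ)`. -/
def commutatorMap {H : Type*} [Group H] {l : ℕ} (x : Fin l → H × H) : H :=
  (List.ofFn fun i => ⁅(x i).1, (x i).2⁆).prod

/-- The map `η_H^l : H^{2l+2} → H`,
`(a₁,b₁,…,a_l,b_l,c₁,c₂) ↦ μ_H^l(a₁,…,b_l)·c₁²·c₂²`. -/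
def etaMap {H : Type*} [Group H] {l : ℕ} (x : (Fin l → H × H) × H × H) : H :=
  commutatorMap x.1 * x.2.1 ^ 2 * x.2.2 ^ 2

lemma comm_central {Gt : Type*} [Group Gt] (a b k k' : Gt)
    (hk : ∀ x, k * x = x * k) (hk' : ∀ x, k' * x = x * k') :
    ⁅a * k, b * k'⁆ = ⁅a, b⁆ :=
  calc ⁅a * k, b * k'⁆ = a * (k * b) * k' * k⁻¹ * a⁻¹ * k'⁻¹ * b⁻¹ := by group
    _ = a * (b * k) * k' * k⁻¹ * a⁻¹ * k'⁻¹ * b⁻¹ := by rw [hk b]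
    _ = a * b * (k * k') * k⁻¹ * a⁻¹ * k'⁻¹ * b⁻¹ := by group
    _ = a * b * (k' * k) * k⁻¹ * a⁻¹ * k'⁻¹ * b⁻¹ := by rw [hk k']
    _ = a * b * (k' * a⁻¹) * k'⁻¹ * b⁻¹ := by group
    _ = a * b * (a⁻¹ * k') * k'⁻¹ * b⁻¹ := by rw [hk' a⁻¹]
    _ = ⁅a, b⁆ := by group

lemma sq_central {Gt : Type*} [Group Gt] (c k : Gt) (hk : ∀ x, k * x = x * k) :
    (c * k) ^ 2 = c ^ 2 * k ^ 2 := by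
  rw [sq, sq, sq]
  calc c * k * (c * k) = c * (k * c) * k := by group
    _ = c * (c * k) * k := by rw [hk c]
    _ = c * c * (k * k) := by group

lemma map_etaMap {Gt H : Type*} [Group Gt] [Group H] (f : Gt →* H) {l : ℕ}
    (xt : (Fin l → Gt × Gt) × Gt × Gt) :
    f (etaMap xt) = etaMap ((fun i => (f (xt.1 i).1, f (xt.1 i).2)), f xt.2.1, f xt.2.2) := by
  simp [etaMap, commutatorMap, map_list_prod, List.map_ofFn, Function.comp_def,
    map_commutatorElement]

lemma eta_rel {Gt G : Type*} [Group G] [Group Gt] (ρ : Gt →* G)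
    (hker : MonoidHom.ker ρ ≤ Subgroup.center Gt)
    {l : ℕ} (xt yt : (Fin l → Gt × Gt) × Gt × Gt)
    (h1 : ∀ i, ρ (xt.1 i).1 = ρ (yt.1 i).1 ∧ ρ (xt.1 i).2 = ρ (yt.1 i).2)
    (h2 : ρ xt.2.1 = ρ yt.2.1) (h3 : ρ xt.2.2 = ρ yt.2.2) :
    ∃ k ∈ MonoidHom.ker ρ, etaMap yt = etaMap xt * k ^ 2 := by
  have hcen : ∀ a b : Gt, ρ a = ρ b → ∀ x, (a⁻¹ * b) * x = x * (a⁻¹ * b) := by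
    intro a b hab x
    have : a⁻¹ * b ∈ MonoidHom.ker ρ := by simp [MonoidHom.mem_ker, hab]
    exact (Subgroup.mem_center_iff.mp (hker this) x).symm
  have hmemk : ∀ a b : Gt, ρ a = ρ b → a⁻¹ * b ∈ MonoidHom.ker ρ := by
    intro a b hab; simp [MonoidHom.mem_ker, hab]
  -- commutator parts agree
  have hcomm : commutatorMap yt.1 = commutatorMap xt.1 := by
    unfold commutatorMap
    refine congrArg List.prod (congrArg List.ofFn (funext fun i => ?_))
    have ha := (h1 i).1
    have hb := (h1 i).2
    have e1 : (yt.1 i).1 = (xt.1 i).1 * ((xt.1 i).1⁻¹ * (yt.1 i).1) := by group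
    have e2 : (yt.1 i).2 = (xt.1 i).2 * ((xt.1 i).2⁻¹ * (yt.1 i).2) := by group
    rw [e1, e2, comm_central _ _ _ _ (hcen _ _ ha) (hcen _ _ hb)]
  set k1 := xt.2.1⁻¹ * yt.2.1 with hk1def
  set k2 := xt.2.2⁻¹ * yt.2.2 with hk2def
  have hk1c := hcen _ _ h2
  have hk2c := hcen _ _ h3
  refine ⟨k1 * k2, mul_mem (hmemk _ _ h2) (hmemk _ _ h3), ?_⟩
  have e1 : yt.2.1 = xt.2.1 * k1 := by rw [hk1def]; group
  have e2 : yt.2.2 = xt.2.2 * k2 := by rw [hk2def]; group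
  have hsq : (k1 * k2) ^ 2 = k1 ^ 2 * k2 ^ 2 := sq_central k1 k2 hk2c
  rw [etaMap, etaMap, hcomm, e1, e2, sq_central _ _ hk1c, sq_central _ _ hk2c, hsq]
  have hmove : k1 ^ 2 * xt.2.2 ^ 2 = xt.2.2 ^ 2 * k1 ^ 2 := by
    rw [sq, sq]
    calc k1 * k1 * (xt.2.2 * xt.2.2) = k1 * (k1 * xt.2.2) * xt.2.2 := by group
      _ = k1 * (xt.2.2 * k1) * xt.2.2 := by rw [hk1c xt.2.2]
      _ = (k1 * xt.2.2) * (k1 * xt.2.2) := by group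
      _ = (xt.2.2 * k1) * (xt.2.2 * k1) := by rw [hk1c xt.2.2]
      _ = xt.2.2 * xt.2.2 * (k1 * k1) := by
          calc (xt.2.2 * k1) * (xt.2.2 * k1) = xt.2.2 * (k1 * xt.2.2) * k1 := by group
            _ = xt.2.2 * (xt.2.2 * k1) * k1 := by rw [hk1c xt.2.2]
            _ = xt.2.2 * xt.2.2 * (k1 * k1) := by group
  calc commutatorMap xt.1 * (xt.2.1 ^ 2 * k1 ^ 2) * (xt.2.2 ^ 2 * k2 ^ 2)
      = commutatorMap xt.1 * xt.2.1 ^ 2 * (k1 ^ 2 * xt.2.2 ^ 2) * k2 ^ 2 := by group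
    _ = commutatorMap xt.1 * xt.2.1 ^ 2 * (xt.2.2 ^ 2 * k1 ^ 2) * k2 ^ 2 := by rw [hmove]
    _ = commutatorMap xt.1 * xt.2.1 ^ 2 * xt.2.2 ^ 2 * (k1 ^ 2 * k2 ^ 2) := by group

/-- in the universal covering setup `ρ : G̃ → G` with central discrete
kernel `K`, if `xt, yt ∈ G̃^{2l+2}` have the same componentwise image `x` under `ρ` and
`η_G^l(x) = e`, then `η_{G̃}^l(xt)` and `η_{G̃}^l(yt)` lie in `K` and differ by a square
of an element of `K` (i.e. have the same class in `K/2K`); moreover this class is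
unchanged under simultaneous conjugation of `x` by any `g ∈ G`.  Hence the obstruction
map `o₂ : (η_G^l)⁻¹(e) → K/2K` is well defined and descends to the conjugation
quotient. -/
theorem obstruction_map_well_defined_even_nonorientable
    {E₁ : Type*} [NormedAddCommGroup E₁] [NormedSpace ℝ E₁]
    {H₁ : Type*} [TopologicalSpace H₁] (I₁ : ModelWithCorners ℝ E₁ H₁)
    (Gt : Type*) [TopologicalSpace Gt] [ChartedSpace H₁ Gt] [Group Gt]
    [IsTopologicalGroup Gt] [LieGroup I₁ (⊤ : ℕ∞) Gt]
    [CompactSpace Gt] [ConnectedSpace Gt] [SimplyConnectedSpace Gt]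
    [LieAlgebra.IsSemisimple ℝ (LeftInvariantDerivation I₁ Gt)]
    {E₂ : Type*} [NormedAddCommGroup E₂] [NormedSpace ℝ E₂]
    {H₂ : Type*} [TopologicalSpace H₂] (I₂ : ModelWithCorners ℝ E₂ H₂)
    (G : Type*) [TopologicalSpace G] [ChartedSpace H₂ G] [Group G]
    [IsTopologicalGroup G] [LieGroup I₂ (⊤ : ℕ∞) G]
    [CompactSpace G] [ConnectedSpace G]
    [LieAlgebra.IsSemisimple ℝ (LeftInvariantDerivation I₂ G)]
    (ρ : Gt →* G) (hρcont : Continuous ρ) (hρsurj : Function.Surjective ρ)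
    [DiscreteTopology ↥(MonoidHom.ker ρ)]
    (hker : MonoidHom.ker ρ ≤ Subgroup.center Gt)
    (l : ℕ) (hl : 1 ≤ l)
    (xt yt : (Fin l → Gt × Gt) × Gt × Gt)
    (hxy : (∀ i, ρ (xt.1 i).1 = ρ (yt.1 i).1 ∧ ρ (xt.1 i).2 = ρ (yt.1 i).2) ∧
      ρ xt.2.1 = ρ yt.2.1 ∧ ρ xt.2.2 = ρ yt.2.2)
    (hx : etaMap ((fun i => (ρ (xt.1 i).1, ρ (xt.1 i).2)), ρ xt.2.1, ρ xt.2.2) = 1) :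
    etaMap xt ∈ MonoidHom.ker ρ ∧ etaMap yt ∈ MonoidHom.ker ρ ∧
      (∃ k ∈ MonoidHom.ker ρ, etaMap xt = etaMap yt * k ^ 2) ∧
      ∀ (g : G) (zt : (Fin l → Gt × Gt) × Gt × Gt),
        ((∀ i, ρ (zt.1 i).1 = g * ρ (xt.1 i).1 * g⁻¹ ∧
            ρ (zt.1 i).2 = g * ρ (xt.1 i).2 * g⁻¹) ∧
          ρ zt.2.1 = g * ρ xt.2.1 * g⁻¹ ∧ ρ zt.2.2 = g * ρ xt.2.2 * g⁻¹) →
        ∃ k ∈ MonoidHom.ker ρ, etaMap zt = etaMap xt * k ^ 2 := by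
  have heq : ((fun i => (ρ (yt.1 i).1, ρ (yt.1 i).2)), ρ yt.2.1, ρ yt.2.2)
      = ((fun i => (ρ (xt.1 i).1, ρ (xt.1 i).2)), ρ xt.2.1, ρ xt.2.2) := by
    refine Prod.ext (funext fun i => ?_) (Prod.ext ?_ ?_)
    · show (ρ (yt.1 i).1, ρ (yt.1 i).2) = (ρ (xt.1 i).1, ρ (xt.1 i).2)
      rw [(hxy.1 i).1, (hxy.1 i).2]
    · exact hxy.2.1.symm
    · exact hxy.2.2.symm
  have memx : etaMap xt ∈ MonoidHom.ker ρ := by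
    rw [MonoidHom.mem_ker, map_etaMap, hx]
  have memy : etaMap yt ∈ MonoidHom.ker ρ := by
    rw [MonoidHom.mem_ker, map_etaMap, heq, hx]
  refine ⟨memx, memy, ?_, ?_⟩
  · exact eta_rel ρ hker yt xt (fun i => ⟨(hxy.1 i).1.symm, (hxy.1 i).2.symm⟩)
      hxy.2.1.symm hxy.2.2.symm
  · intro g zt hz
    obtain ⟨gt, hgt⟩ := hρsurj g
    set f := (MulAut.conj gt).toMonoidHom with hf
    have hfeq : ∀ x : Gt, f x = gt * x * gt⁻¹ := fun x => by
      simp [hf, MulAut.conj_apply]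
    have hρf : ∀ x : Gt, ρ (f x) = g * ρ x * g⁻¹ := fun x => by
      rw [hfeq]; simp [map_mul, hgt]
    obtain ⟨k, hk, hzk⟩ := eta_rel ρ hker
      ((fun i => (f (xt.1 i).1, f (xt.1 i).2)), f xt.2.1, f xt.2.2) zt
      (fun i => ⟨by rw [hρf, (hz.1 i).1], by rw [hρf, (hz.1 i).2]⟩)
      (by rw [hρf, hz.2.1]) (by rw [hρf, hz.2.2])
    refine ⟨k, hk, ?_⟩
    have hwt : etaMap ((fun i => (f (xt.1 i).1, f (xt.1 i).2)), f xt.2.1, f xt.2.2)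
        = etaMap xt := by
      rw [← map_etaMap f xt, hfeq]
      have hc := Subgroup.mem_center_iff.mp (hker memx) gt
      rw [hc]; group
    rw [hzk, hwt]
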